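/- Let q₁, q₂, q₃ > 0 satisfy q₁q₃ - q₂² > 0 and (9/25)·q₂²(q₁q₃ + q₂²)/(q₁q₃ - q₂²)² < 1. Then for every 2×2 real symmetric matrix C = [[c₁₁, c₁₂],[c₁₂, c₂₂]] with c₁₁c₂₂ > 0, one has q₁²c₁₁² + (2q₁q₃ + 2q₂²)c₁₂² + q₃²c₂₂² + 4q₁q₂c₁₁c₁₂ + 4q₂q₃c₁₂c₂₂ + 2q₂²c₁₁c₂₂ ≥ 2c₁₁c₂₂(q₁q₃ - q₂²)²/(q₁q₃ + q₂²). -/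
import Mathlib


/-- Trace estimate for `Tr(QCQC)` with `Q = [[q₁,q₂],[q₂,q₃]]` and a symmetric matrix `C`
with `c₁₁c₂₂ > 0`. -/
theorem stmt7 (q₁ q₂ q₃ : ℝ) (hq₁ : 0 < q₁) (hq₂ : 0 < q₂) (hq₃ : 0 < q₃)
    (hdet : 0 < q₁ * q₃ - q₂ ^ 2)
    (hcond : (9 / 25) * (q₂ ^ 2 * (q₁ * q₃ + q₂ ^ 2)) / (q₁ * q₃ - q₂ ^ 2) ^ 2 < 1)
    (c₁₁ c₁₂ c₂₂ : ℝ) (hc : 0 < c₁₁ * c₂₂) :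
    q₁ ^ 2 * c₁₁ ^ 2 + (2 * q₁ * q₃ + 2 * q₂ ^ 2) * c₁₂ ^ 2 + q₃ ^ 2 * c₂₂ ^ 2
        + 4 * q₁ * q₂ * c₁₁ * c₁₂ + 4 * q₂ * q₃ * c₁₂ * c₂₂ + 2 * q₂ ^ 2 * c₁₁ * c₂₂
      ≥ 2 * c₁₁ * c₂₂ * (q₁ * q₃ - q₂ ^ 2) ^ 2 / (q₁ * q₃ + q₂ ^ 2) := by
  have hs : 0 < q₁ * q₃ + q₂ ^ 2 := by nlinarith
  rw [ge_iff_le, div_le_iff₀ hs]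
  nlinarith [sq_nonneg ((q₁ * q₃ + q₂ ^ 2) * c₁₂ + q₂ * (q₁ * c₁₁ + q₃ * c₂₂)),
    mul_pos hdet hs, sq_nonneg (q₁ * c₁₁ - q₃ * c₂₂),
    mul_nonneg (mul_pos hdet hs).le (sq_nonneg (q₁ * c₁₁ - q₃ * c₂₂))]
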